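/- arXiv:1403.7732 — 2 statements merged into one kernel-verified Lean document; each statement's English description precedes it below -/
import Mathlib

section
/- Let X₁, X₂ be complex Banach spaces, X := X₁ × X₂, and let 𝒜 = [[A, B],[C, D]] be a block operator matrix on X. Suppose D is closed with nonempty resolvent set ρ(D) and D(D) ⊆ D(B). Then for every λ ∈ ρ(D), one has the Frobenius–Schur factorization 𝒜 − λ = [[I, B(D−λ)⁻¹],[0, I]] · [[S₁(λ), 0],[0, D−λ]] · [[I, 0],[(D−λ)⁻¹C, I]] as an equality of (unbounded) operators on X, including domains, where S₁(λ) := A − λ − B(D−λ)⁻¹C is the first Schur complement with domain D(S₁(λ)) = D(A) ∩ D(C), and each factor denotes the operator induced by the indicated block operator matrix. -/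
open LinearPMap
open scoped LinearPMap

namespace BlockOp

variable {E F G X₁ X₂ Y₁ Y₂ : Type*}
  [AddCommGroup E] [Module ℂ E] [AddCommGroup F] [Module ℂ F] [AddCommGroup G] [Module ℂ G]
  [AddCommGroup X₁] [Module ℂ X₁] [AddCommGroup X₂] [Module ℂ X₂]
  [AddCommGroup Y₁] [Module ℂ Y₁] [AddCommGroup Y₂] [Module ℂ Y₂]

/-- The operator on `X₁ × X₂` induced by a block operator matrix `[[A, B], [C, D]]`. -/
noncomputable def blockOp (A : X₁ →ₗ.[ℂ] Y₁) (B : X₂ →ₗ.[ℂ] Y₁)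
    (C : X₁ →ₗ.[ℂ] Y₂) (D : X₂ →ₗ.[ℂ] Y₂) : (X₁ × X₂) →ₗ.[ℂ] (Y₁ × Y₂) where
  domain := (A.domain ⊓ C.domain).prod (B.domain ⊓ D.domain)
  toFun := LinearMap.prod
    (A.toFun ∘ₗ Submodule.inclusion inf_le_left ∘ₗ
        (LinearMap.fst ℂ X₁ X₂).restrict
          (p := (A.domain ⊓ C.domain).prod (B.domain ⊓ D.domain))
          (q := A.domain ⊓ C.domain) (fun _ hx => hx.1)
      + B.toFun ∘ₗ Submodule.inclusion inf_le_left ∘ₗ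
        (LinearMap.snd ℂ X₁ X₂).restrict
          (p := (A.domain ⊓ C.domain).prod (B.domain ⊓ D.domain))
          (q := B.domain ⊓ D.domain) (fun _ hx => hx.2))
    (C.toFun ∘ₗ Submodule.inclusion inf_le_right ∘ₗ
        (LinearMap.fst ℂ X₁ X₂).restrict
          (p := (A.domain ⊓ C.domain).prod (B.domain ⊓ D.domain))
          (q := A.domain ⊓ C.domain) (fun _ hx => hx.1)
      + D.toFun ∘ₗ Submodule.inclusion inf_le_right ∘ₗ
        (LinearMap.snd ℂ X₁ X₂).restrict
          (p := (A.domain ⊓ C.domain).prod (B.domain ⊓ D.domain))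
          (q := B.domain ⊓ D.domain) (fun _ hx => hx.2))

/-- A linear operator on a product space has a matrix representation if it is induced
by some block operator matrix. -/
def HasMatrixRep (T : (X₁ × X₂) →ₗ.[ℂ] (Y₁ × Y₂)) : Prop :=
  ∃ (A : X₁ →ₗ.[ℂ] Y₁) (B : X₂ →ₗ.[ℂ] Y₁) (C : X₁ →ₗ.[ℂ] Y₂) (D : X₂ →ₗ.[ℂ] Y₂),
    T = blockOp A B C D

/-- The composition of two partially defined operators, with its natural domain
`{x ∈ D(B) : B x ∈ D(A)}`. -/
noncomputable def pcomp (A : F →ₗ.[ℂ] G) (B : E →ₗ.[ℂ] F) : E →ₗ.[ℂ] G where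
  domain :=
    { carrier := {x | ∃ hx : x ∈ B.domain, B ⟨x, hx⟩ ∈ A.domain}
      zero_mem' := ⟨B.domain.zero_mem, by
        have : (⟨0, B.domain.zero_mem⟩ : B.domain) = 0 := rfl
        rw [this, LinearPMap.map_zero]; exact A.domain.zero_mem⟩
      add_mem' := by
        rintro a b ⟨ha, ha'⟩ ⟨hb, hb'⟩
        refine ⟨add_mem ha hb, ?_⟩
        have : (⟨a + b, add_mem ha hb⟩ : B.domain) = ⟨a, ha⟩ + ⟨b, hb⟩ := rfl
        rw [this, LinearPMap.map_add]
        exact add_mem ha' hb'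
      smul_mem' := by
        rintro c a ⟨ha, ha'⟩
        refine ⟨Submodule.smul_mem _ c ha, ?_⟩
        have : (⟨c • a, Submodule.smul_mem _ c ha⟩ : B.domain) = c • (⟨a, ha⟩ : B.domain) := rfl
        rw [this, LinearPMap.map_smul]
        exact Submodule.smul_mem _ c ha' }
  toFun := A.toFun ∘ₗ LinearMap.codRestrict A.domain
      (B.toFun ∘ₗ
        { toFun := fun x => (⟨(x : E), x.2.choose⟩ : B.domain)
          map_add' := fun x y => Subtype.ext rfl
          map_smul' := fun c x => Subtype.ext rfl })
      (fun x => x.2.choose_spec)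

end BlockOp

namespace BlockOp

section Transport

variable {E F G E' F' : Type*}
  [AddCommGroup E] [Module ℂ E] [AddCommGroup F] [Module ℂ F] [AddCommGroup G] [Module ℂ G]
  [AddCommGroup E'] [Module ℂ E'] [AddCommGroup F'] [Module ℂ F']

/-- Transport a partially defined linear map along linear equivalences. -/
noncomputable def pmapCongr (e : E ≃ₗ[ℂ] E') (T : E' →ₗ.[ℂ] F') (e' : F' ≃ₗ[ℂ] F) :
    E →ₗ.[ℂ] F where
  domain := T.domain.comap (e : E →ₗ[ℂ] E')
  toFun := (e' : F' →ₗ[ℂ] F) ∘ₗ T.toFun ∘ₗ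
    ((e : E →ₗ[ℂ] E').restrict (p := T.domain.comap (e : E →ₗ[ℂ] E')) (q := T.domain)
      (fun _ hx => hx))

end Transport

section Corners

variable {X₁ X₂ Y₁ Y₂ : Type*}
  [AddCommGroup X₁] [Module ℂ X₁] [AddCommGroup X₂] [Module ℂ X₂]
  [AddCommGroup Y₁] [Module ℂ Y₁] [AddCommGroup Y₂] [Module ℂ Y₂]

/-- The upper-left corner `P₁ 𝒜 J₁` of an operator on a product space, with domain
`{x₁ : (x₁, 0) ∈ D(𝒜)}`. -/
noncomputable def corner₁₁ (T : (X₁ × X₂) →ₗ.[ℂ] (Y₁ × Y₂)) : X₁ →ₗ.[ℂ] Y₁ where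
  domain := T.domain.comap (LinearMap.inl ℂ X₁ X₂)
  toFun := LinearMap.fst ℂ Y₁ Y₂ ∘ₗ T.toFun ∘ₗ
    ((LinearMap.inl ℂ X₁ X₂).restrict (p := T.domain.comap (LinearMap.inl ℂ X₁ X₂))
      (q := T.domain) (fun _ hx => hx))

/-- The lower-left corner `P₂ 𝒜 J₁`. -/
noncomputable def corner₂₁ (T : (X₁ × X₂) →ₗ.[ℂ] (Y₁ × Y₂)) : X₁ →ₗ.[ℂ] Y₂ where
  domain := T.domain.comap (LinearMap.inl ℂ X₁ X₂)
  toFun := LinearMap.snd ℂ Y₁ Y₂ ∘ₗ T.toFun ∘ₗ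
    ((LinearMap.inl ℂ X₁ X₂).restrict (p := T.domain.comap (LinearMap.inl ℂ X₁ X₂))
      (q := T.domain) (fun _ hx => hx))

/-- The upper-right corner `P₁ 𝒜 J₂`. -/
noncomputable def corner₁₂ (T : (X₁ × X₂) →ₗ.[ℂ] (Y₁ × Y₂)) : X₂ →ₗ.[ℂ] Y₁ where
  domain := T.domain.comap (LinearMap.inr ℂ X₁ X₂)
  toFun := LinearMap.fst ℂ Y₁ Y₂ ∘ₗ T.toFun ∘ₗ
    ((LinearMap.inr ℂ X₁ X₂).restrict (p := T.domain.comap (LinearMap.inr ℂ X₁ X₂))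
      (q := T.domain) (fun _ hx => hx))

/-- The lower-right corner `P₂ 𝒜 J₂`. -/
noncomputable def corner₂₂ (T : (X₁ × X₂) →ₗ.[ℂ] (Y₁ × Y₂)) : X₂ →ₗ.[ℂ] Y₂ where
  domain := T.domain.comap (LinearMap.inr ℂ X₁ X₂)
  toFun := LinearMap.snd ℂ Y₁ Y₂ ∘ₗ T.toFun ∘ₗ
    ((LinearMap.inr ℂ X₁ X₂).restrict (p := T.domain.comap (LinearMap.inr ℂ X₁ X₂))
      (q := T.domain) (fun _ hx => hx))

end Corners

section Shift

variable {E : Type*} [AddCommGroup E] [Module ℂ E]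

/-- `T - λ`, i.e. `T - λ·I`, with domain `D(T)`. -/
noncomputable def shift (T : E →ₗ.[ℂ] E) (lam : ℂ) : E →ₗ.[ℂ] E :=
  T - (lam • (LinearMap.id : E →ₗ[ℂ] E)).toPMap ⊤

/-- The identity as a partially defined operator with full domain. -/
noncomputable def idP (E : Type*) [AddCommGroup E] [Module ℂ E] : E →ₗ.[ℂ] E :=
  (LinearMap.id : E →ₗ[ℂ] E).toPMap ⊤

end Shift

section Resolvent

variable {E : Type*} [NormedAddCommGroup E] [NormedSpace ℂ E]

/-- `R` is the (bounded, everywhere defined) inverse of `T - λ`;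
this witnesses that `λ` belongs to the resolvent set of `T`. -/
structure IsResolventAt (T : E →ₗ.[ℂ] E) (lam : ℂ) (R : E →L[ℂ] E) : Prop where
  mem : ∀ y, R y ∈ T.domain
  right_inv : ∀ y, T ⟨R y, mem y⟩ - lam • (R y) = y
  left_inv : ∀ x : T.domain, R (T x - lam • (x : E)) = x

/-- The resolvent set of `T`: those `λ ∈ ℂ` for which `T - λ` is a bijection from `D(T)`
onto the whole space with bounded inverse. -/
def resolventSet (T : E →ₗ.[ℂ] E) : Set ℂ :=
  {lam | ∃ R : E →L[ℂ] E, IsResolventAt T lam R}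

end Resolvent

section RelativeBound

variable {E F G : Type*} [NormedAddCommGroup E] [NormedSpace ℂ E]
  [NormedAddCommGroup F] [NormedSpace ℂ F] [NormedAddCommGroup G] [NormedSpace ℂ G]

/-- `S` is `T`-bounded with constants `a`, `b`:
`D(T) ⊆ D(S)` and `‖S x‖ ≤ a ‖x‖ + b ‖T x‖` on `D(T)`. -/
structure RelBound (S : E →ₗ.[ℂ] G) (T : E →ₗ.[ℂ] F) (a b : ℝ) : Prop where
  dom_le : T.domain ≤ S.domain
  bound : ∀ x : T.domain, ‖S ⟨(x : E), dom_le x.2⟩‖ ≤ a * ‖(x : E)‖ + b * ‖T x‖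

/-- `S` is `T`-bounded with relative bound `< c`. -/
def IsRelBoundedLt (S : E →ₗ.[ℂ] G) (T : E →ₗ.[ℂ] F) (c : ℝ) : Prop :=
  ∃ b, 0 ≤ b ∧ b < c ∧ ∃ a, 0 ≤ a ∧ RelBound S T a b

/-- `S` is `T`-bounded with relative bound `≤ c` (for `c = 0`: relative bound `0`). -/
def IsRelBoundedLe (S : E →ₗ.[ℂ] G) (T : E →ₗ.[ℂ] F) (c : ℝ) : Prop :=
  ∀ b, c < b → ∃ a, 0 ≤ a ∧ RelBound S T a b

end RelativeBound

section HilbertProduct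

variable {H₁ H₂ K₁ K₂ : Type*}
  [NormedAddCommGroup H₁] [InnerProductSpace ℂ H₁]
  [NormedAddCommGroup H₂] [InnerProductSpace ℂ H₂]
  [NormedAddCommGroup K₁] [InnerProductSpace ℂ K₁]
  [NormedAddCommGroup K₂] [InnerProductSpace ℂ K₂]

/-- The operator induced by a block operator matrix on the Hilbert space
`H₁ ×_{ℓ²} H₂`, i.e. `WithLp 2 (H₁ × H₂)`. -/
noncomputable def blockOpL (A : H₁ →ₗ.[ℂ] K₁) (B : H₂ →ₗ.[ℂ] K₁)
    (C : H₁ →ₗ.[ℂ] K₂) (D : H₂ →ₗ.[ℂ] K₂) :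
    WithLp 2 (H₁ × H₂) →ₗ.[ℂ] WithLp 2 (K₁ × K₂) :=
  pmapCongr (WithLp.linearEquiv 2 ℂ (H₁ × H₂)) (blockOp A B C D)
    (WithLp.linearEquiv 2 ℂ (K₁ × K₂)).symm

/-- A linear operator on `H₁ ×_{ℓ²} H₂` has a matrix representation if it is induced by
some block operator matrix. -/
def HasMatrixRepL (T : WithLp 2 (H₁ × H₂) →ₗ.[ℂ] WithLp 2 (K₁ × K₂)) : Prop :=
  ∃ (A : H₁ →ₗ.[ℂ] K₁) (B : H₂ →ₗ.[ℂ] K₁) (C : H₁ →ₗ.[ℂ] K₂) (D : H₂ →ₗ.[ℂ] K₂),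
    T = blockOpL A B C D

end HilbertProduct

section EssSelfAdjoint

variable {E : Type*} [NormedAddCommGroup E] [InnerProductSpace ℂ E] [CompleteSpace E]

/-- An operator is essentially self-adjoint if it is closable and its closure is
self-adjoint. -/
def IsEssentiallySelfAdjoint (T : E →ₗ.[ℂ] E) : Prop :=
  T.IsClosable ∧ IsSelfAdjoint T.closure

end EssSelfAdjoint

end BlockOp

namespace BlockOp

section Helpers

variable {E F G X₁ X₂ Y₁ Y₂ : Type*}
  [AddCommGroup E] [Module ℂ E] [AddCommGroup F] [Module ℂ F] [AddCommGroup G] [Module ℂ G]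
  [AddCommGroup X₁] [Module ℂ X₁] [AddCommGroup X₂] [Module ℂ X₂]
  [AddCommGroup Y₁] [Module ℂ Y₁] [AddCommGroup Y₂] [Module ℂ Y₂]

lemma apply_congr (f : E →ₗ.[ℂ] F) {x y : f.domain} (h : (x : E) = (y : E)) : f x = f y := by
  congr 1; exact Subtype.ext h

lemma mem_pcomp_domain {A : F →ₗ.[ℂ] G} {B : E →ₗ.[ℂ] F} {x : E} :
    x ∈ (pcomp A B).domain ↔ ∃ hx : x ∈ B.domain, B ⟨x, hx⟩ ∈ A.domain := Iff.rfl

lemma pcomp_apply (A : F →ₗ.[ℂ] G) (B : E →ₗ.[ℂ] F) (x : (pcomp A B).domain)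
    (h1 : (x : E) ∈ B.domain) (h2 : B ⟨(x : E), h1⟩ ∈ A.domain) :
    pcomp A B x = A ⟨B ⟨(x : E), h1⟩, h2⟩ := rfl

lemma blockOp_apply (A : X₁ →ₗ.[ℂ] Y₁) (B : X₂ →ₗ.[ℂ] Y₁) (C : X₁ →ₗ.[ℂ] Y₂)
    (D : X₂ →ₗ.[ℂ] Y₂) (x : (blockOp A B C D).domain) :
    blockOp A B C D x =
      (A ⟨(x : X₁ × X₂).1, x.2.1.1⟩ + B ⟨(x : X₁ × X₂).2, x.2.2.1⟩,
       C ⟨(x : X₁ × X₂).1, x.2.1.2⟩ + D ⟨(x : X₁ × X₂).2, x.2.2.2⟩) := rfl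

lemma mem_blockOp_domain {A : X₁ →ₗ.[ℂ] Y₁} {B : X₂ →ₗ.[ℂ] Y₁} {C : X₁ →ₗ.[ℂ] Y₂}
    {D : X₂ →ₗ.[ℂ] Y₂} {x : X₁ × X₂} :
    x ∈ (blockOp A B C D).domain ↔
      (x.1 ∈ A.domain ∧ x.1 ∈ C.domain) ∧ (x.2 ∈ B.domain ∧ x.2 ∈ D.domain) := Iff.rfl

lemma shift_domain (T : E →ₗ.[ℂ] E) (lam : ℂ) :
    (shift T lam).domain = T.domain ⊓ ⊤ := rfl

lemma shift_apply (T : E →ₗ.[ℂ] E) (lam : ℂ) (x : (shift T lam).domain) :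
    shift T lam x = T ⟨(x : E), x.2.1⟩ - lam • (x : E) := rfl

end Helpers

theorem statement2 {X₁ X₂ : Type*}
    [NormedAddCommGroup X₁] [NormedSpace ℂ X₁] [CompleteSpace X₁]
    [NormedAddCommGroup X₂] [NormedSpace ℂ X₂] [CompleteSpace X₂]
    (A : X₁ →ₗ.[ℂ] X₁) (B : X₂ →ₗ.[ℂ] X₁) (C : X₁ →ₗ.[ℂ] X₂) (D : X₂ →ₗ.[ℂ] X₂)
    (hDclosed : D.IsClosed) (hres : (resolventSet D).Nonempty) (hDB : D.domain ≤ B.domain)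
    (lam : ℂ) (R : X₂ →L[ℂ] X₂) (hR : IsResolventAt D lam R) :
    (shift A lam - pcomp B ((R : X₂ →ₗ[ℂ] X₂).compPMap C)).domain = A.domain ⊓ C.domain ∧
    shift (blockOp A B C D) lam =
      pcomp
        (blockOp (idP X₁) (pcomp B ((R : X₂ →ₗ[ℂ] X₂).toPMap ⊤)) (0 : X₁ →ₗ.[ℂ] X₂) (idP X₂))
        (pcomp
          (blockOp (shift A lam - pcomp B ((R : X₂ →ₗ[ℂ] X₂).compPMap C)) 0 0 (shift D lam))
          (blockOp (idP X₁) 0 ((R : X₂ →ₗ[ℂ] X₂).compPMap C) (idP X₂))) := by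
  classical
  set Rl : X₂ →ₗ[ℂ] X₂ := (R : X₂ →ₗ[ℂ] X₂) with hRldef
  have hRB : ∀ y, Rl y ∈ B.domain := fun y => hDB (hR.mem y)
  set S : X₁ →ₗ.[ℂ] X₁ := shift A lam - pcomp B (Rl.compPMap C) with hSdef
  set L : (X₁ × X₂) →ₗ.[ℂ] (X₁ × X₂) := blockOp (idP X₁) 0 (Rl.compPMap C) (idP X₂) with hLdef
  set Mb : (X₁ × X₂) →ₗ.[ℂ] (X₁ × X₂) := blockOp S 0 0 (shift D lam) with hMbdef
  set U : (X₁ × X₂) →ₗ.[ℂ] (X₁ × X₂) :=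
    blockOp (idP X₁) (pcomp B (Rl.toPMap ⊤)) 0 (idP X₂) with hUdef
  have hSdom : S.domain = A.domain ⊓ C.domain := by
    apply le_antisymm
    · rintro x ⟨⟨hA', -⟩, hC', -⟩
      exact ⟨hA', hC'⟩
    · rintro x ⟨hA', hC'⟩
      exact ⟨⟨hA', trivial⟩, hC', hRB _⟩
  refine ⟨hSdom, ?_⟩
  refine LinearPMap.ext ?_ ?_
  · -- domain equality
    apply Submodule.ext
    rintro ⟨x₁, x₂⟩
    constructor
    · rintro ⟨⟨⟨hA', hC'⟩, hB', hD'⟩, -⟩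
      have pS0 : x₁ + 0 ∈ S.domain := by
        rw [add_zero, hSdom]; exact ⟨hA', hC'⟩
      have hLmem0 : ((x₁, x₂) : X₁ × X₂) ∈ L.domain := ⟨⟨trivial, hC'⟩, trivial, trivial⟩
      have hwD : Rl (C ⟨x₁, hC'⟩) + x₂ ∈ D.domain := add_mem (hR.mem (C ⟨x₁, hC'⟩)) hD'
      have hMb0 : L ⟨((x₁, x₂) : X₁ × X₂), hLmem0⟩ ∈ Mb.domain :=
        ⟨⟨pS0, trivial⟩, trivial, hwD, trivial⟩
      have hMmem : ((x₁, x₂) : X₁ × X₂) ∈ (pcomp Mb L).domain := ⟨hLmem0, hMb0⟩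
      have hUmem : (pcomp Mb L) ⟨((x₁, x₂) : X₁ × X₂), hMmem⟩ ∈ U.domain :=
        ⟨⟨trivial, trivial⟩, ⟨trivial, hRB _⟩, trivial⟩
      exact ⟨hMmem, hUmem⟩
    · rintro ⟨⟨hLmem, hMb0⟩, -⟩
      have hC' : x₁ ∈ C.domain := hLmem.1.2
      obtain ⟨⟨pS0', -⟩, -, hwD', -⟩ := id hMb0
      have h1 : x₁ + 0 ∈ S.domain := pS0'
      have h2 : R (C ⟨x₁, hC'⟩) + x₂ ∈ D.domain := hwD'
      rw [add_zero, hSdom] at h1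
      have hD' : x₂ ∈ D.domain := by
        have h3 := sub_mem h2 (hR.mem (C ⟨x₁, hC'⟩))
        simpa using h3
      exact ⟨⟨⟨h1.1, h1.2⟩, hDB hD', hD'⟩, trivial⟩
  · -- value equality
    intro x hx hy
    obtain ⟨x₁, x₂⟩ := x
    have hA' : x₁ ∈ A.domain := hx.1.1.1
    have hC' : x₁ ∈ C.domain := hx.1.1.2
    have hB' : x₂ ∈ B.domain := hx.1.2.1
    have hD' : x₂ ∈ D.domain := hx.1.2.2
    have pS : x₁ ∈ S.domain := by rw [hSdom]; exact ⟨hA', hC'⟩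
    have pS0 : x₁ + 0 ∈ S.domain := by rw [add_zero]; exact pS
    have hwD : Rl (C ⟨x₁, hC'⟩) + x₂ ∈ D.domain := add_mem (hR.mem (C ⟨x₁, hC'⟩)) hD'
    have hB2 : Rl (0 + (D ⟨Rl (C ⟨x₁, hC'⟩) + x₂, hwD⟩
        - lam • (Rl (C ⟨x₁, hC'⟩) + x₂))) ∈ B.domain := hRB _
    show (A ⟨x₁, hA'⟩ + B ⟨x₂, hB'⟩ - lam • x₁,
          C ⟨x₁, hC'⟩ + D ⟨x₂, hD'⟩ - lam • x₂) =
        ((S ⟨x₁ + 0, pS0⟩ + 0) +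
            B ⟨Rl (0 + (D ⟨Rl (C ⟨x₁, hC'⟩) + x₂, hwD⟩
                - lam • (Rl (C ⟨x₁, hC'⟩) + x₂))), hB2⟩,
          0 + (0 + (D ⟨Rl (C ⟨x₁, hC'⟩) + x₂, hwD⟩
                - lam • (Rl (C ⟨x₁, hC'⟩) + x₂))))
    have hRw : Rl (0 + (D ⟨Rl (C ⟨x₁, hC'⟩) + x₂, hwD⟩
        - lam • (Rl (C ⟨x₁, hC'⟩) + x₂))) = Rl (C ⟨x₁, hC'⟩) + x₂ := by
      rw [zero_add]
      exact hR.left_inv ⟨Rl (C ⟨x₁, hC'⟩) + x₂, hwD⟩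
    rw [show B ⟨Rl (0 + (D ⟨Rl (C ⟨x₁, hC'⟩) + x₂, hwD⟩
          - lam • (Rl (C ⟨x₁, hC'⟩) + x₂))), hB2⟩
        = B ⟨Rl (C ⟨x₁, hC'⟩) + x₂, hDB hwD⟩ from apply_congr B hRw]
    rw [show (⟨Rl (C ⟨x₁, hC'⟩) + x₂, hDB hwD⟩ : B.domain)
        = ⟨Rl (C ⟨x₁, hC'⟩), hRB (C ⟨x₁, hC'⟩)⟩ + ⟨x₂, hB'⟩ from rfl]
    rw [show (⟨Rl (C ⟨x₁, hC'⟩) + x₂, hwD⟩ : D.domain)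
        = ⟨Rl (C ⟨x₁, hC'⟩), hR.mem (C ⟨x₁, hC'⟩)⟩ + ⟨x₂, hD'⟩ from rfl]
    rw [LinearPMap.map_add, LinearPMap.map_add]
    rw [show S ⟨x₁ + 0, pS0⟩ = S ⟨x₁, pS⟩ from apply_congr S (add_zero x₁)]
    rw [show S ⟨x₁, pS⟩ = A ⟨x₁, hA'⟩ - lam • x₁
          - B ⟨Rl (C ⟨x₁, hC'⟩), hRB (C ⟨x₁, hC'⟩)⟩ from rfl]
    rw [show D ⟨Rl (C ⟨x₁, hC'⟩), hR.mem (C ⟨x₁, hC'⟩)⟩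
        = C ⟨x₁, hC'⟩ + lam • Rl (C ⟨x₁, hC'⟩) from
          eq_add_of_sub_eq (hR.right_inv (C ⟨x₁, hC'⟩))]
    rw [smul_add]
    refine Prod.ext ?_ ?_ <;> · show _ = _; abel

end BlockOp
end

section
/- Let H₁, H₂ be complex Hilbert spaces, H := H₁ × H₂, and let 𝒜 = [[A, B],[C, D]] be a block operator matrix on H such that D(A) = D(C) =: D₁ is dense in H₁ and D(B) = D(D) =: D₂ is dense in H₂ (so D(𝒜) = D₁ × D₂ is dense in H). If the induced operator 𝒜 is self-adjoint, then A, B, C, D are closable and 𝒜 equals the operator induced by the block operator matrix of closures [[Ā, B̄],[C̄, D̄]], and moreover 𝒜 equals its formal adjoint 𝒜^×, the operator induced by [[A*, C*],[B*, D*]]. -/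
open LinearPMap
open scoped LinearPMap

namespace BlockOp

section Aux

open LinearPMap

local notation "⟪" x ", " y "⟫" => @inner ℂ _ _ x y

variable {E F : Type*} [NormedAddCommGroup E] [InnerProductSpace ℂ E]
  [NormedAddCommGroup F] [InnerProductSpace ℂ F]

/-- The adjoint of a densely defined operator is closed. -/
theorem aux_adjoint_isClosed [CompleteSpace E] {T : E →ₗ.[ℂ] F}
    (hT : Dense (T.domain : Set E)) : T.adjoint.IsClosed := by
  have hgraph : (T.adjoint.graph : Set (F × E)) =
      ⋂ x : T.domain, {p : F × E | ⟪p.2, (x : E)⟫ = ⟪p.1, T x⟫} := by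
    ext p
    simp only [Set.mem_iInter, Set.mem_setOf_eq, SetLike.mem_coe, LinearPMap.mem_graph_iff]
    constructor
    · rintro ⟨y, hy1, hy2⟩ x
      rw [← hy1, ← hy2]
      exact adjoint_isFormalAdjoint hT y x
    · intro h
      have hmem : p.1 ∈ T.adjoint.domain :=
        mem_adjoint_domain_of_exists _ ⟨p.2, fun x => h x⟩
      exact ⟨⟨p.1, hmem⟩, rfl, (adjoint_apply_eq hT ⟨p.1, hmem⟩ fun x => h x)⟩
  show IsClosed (T.adjoint.graph : Set (F × E))
  rw [hgraph]
  exact isClosed_iInter fun x =>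
    isClosed_eq (Continuous.inner continuous_snd continuous_const)
      (Continuous.inner continuous_fst continuous_const)

/-- If `f ≤ g` and `g` is closed, then the closure of `f` is contained in `g`. -/
theorem aux_closure_le_of_le_closed {f g : E →ₗ.[ℂ] F} (h : f ≤ g) (hg : g.IsClosed) :
    f.closure ≤ g := by
  have hf : f.IsClosable := hg.isClosable.leIsClosable h
  apply LinearPMap.le_of_le_graph
  rw [← hf.graph_closure_eq_closure_graph]
  exact Submodule.topologicalClosure_minimal _ (LinearPMap.le_graph_of_le h) hg

end Aux

section Plumb

open LinearPMap

local notation "⟪" x ", " y "⟫" => @inner ℂ _ _ x y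

variable {H₁ H₂ K₁ K₂ : Type*}
  [NormedAddCommGroup H₁] [InnerProductSpace ℂ H₁]
  [NormedAddCommGroup H₂] [InnerProductSpace ℂ H₂]
  [NormedAddCommGroup K₁] [InnerProductSpace ℂ K₁]
  [NormedAddCommGroup K₂] [InnerProductSpace ℂ K₂]

theorem mem_blockOpL_domain_iff {A : H₁ →ₗ.[ℂ] K₁} {B : H₂ →ₗ.[ℂ] K₁}
    {C : H₁ →ₗ.[ℂ] K₂} {D : H₂ →ₗ.[ℂ] K₂} {x : WithLp 2 (H₁ × H₂)} :
    x ∈ (blockOpL A B C D).domain ↔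
      (x.fst ∈ A.domain ∧ x.fst ∈ C.domain) ∧ (x.snd ∈ B.domain ∧ x.snd ∈ D.domain) :=
  Iff.rfl

theorem blockOpL_apply {A : H₁ →ₗ.[ℂ] K₁} {B : H₂ →ₗ.[ℂ] K₁}
    {C : H₁ →ₗ.[ℂ] K₂} {D : H₂ →ₗ.[ℂ] K₂} {x : WithLp 2 (H₁ × H₂)}
    (ha : x.fst ∈ A.domain) (hc : x.fst ∈ C.domain)
    (hb : x.snd ∈ B.domain) (hd : x.snd ∈ D.domain)
    (hx : x ∈ (blockOpL A B C D).domain) :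
    blockOpL A B C D ⟨x, hx⟩ = (WithLp.equiv 2 (K₁ × K₂)).symm
      (A ⟨x.fst, ha⟩ + B ⟨x.snd, hb⟩, C ⟨x.fst, hc⟩ + D ⟨x.snd, hd⟩) :=
  rfl


theorem blockOpL_apply' {A : H₁ →ₗ.[ℂ] K₁} {B : H₂ →ₗ.[ℂ] K₁}
    {C : H₁ →ₗ.[ℂ] K₂} {D : H₂ →ₗ.[ℂ] K₂} {u : H₁} {v : H₂}
    (ha : u ∈ A.domain) (hc : u ∈ C.domain) (hb : v ∈ B.domain) (hd : v ∈ D.domain)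
    (hx : (WithLp.equiv 2 (H₁ × H₂)).symm (u, v) ∈ (blockOpL A B C D).domain) :
    blockOpL A B C D ⟨(WithLp.equiv 2 (H₁ × H₂)).symm (u, v), hx⟩ =
      (WithLp.equiv 2 (K₁ × K₂)).symm
        (A ⟨u, ha⟩ + B ⟨v, hb⟩, C ⟨u, hc⟩ + D ⟨v, hd⟩) :=
  rfl

theorem blockOpL_mono {A A' : H₁ →ₗ.[ℂ] K₁} {B B' : H₂ →ₗ.[ℂ] K₁}
    {C C' : H₁ →ₗ.[ℂ] K₂} {D D' : H₂ →ₗ.[ℂ] K₂}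
    (hA : A ≤ A') (hB : B ≤ B') (hC : C ≤ C') (hD : D ≤ D') :
    blockOpL A B C D ≤ blockOpL A' B' C' D' := by
  have hdom : (blockOpL A B C D).domain ≤ (blockOpL A' B' C' D').domain := by
    intro x hx
    rw [mem_blockOpL_domain_iff] at hx ⊢
    exact ⟨⟨hA.1 hx.1.1, hC.1 hx.1.2⟩, ⟨hB.1 hx.2.1, hD.1 hx.2.2⟩⟩
  refine ⟨hdom, ?_⟩
  rintro ⟨x, hx⟩ ⟨y, hy⟩ hxy
  have hxy' : x = y := hxy
  subst hxy'
  obtain ⟨⟨ha, hc⟩, hb, hd⟩ := mem_blockOpL_domain_iff.mp hx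
  rw [blockOpL_apply ha hc hb hd hx,
    blockOpL_apply (hA.1 ha) (hC.1 hc) (hB.1 hb) (hD.1 hd) hy]
  have e1 : A ⟨x.fst, ha⟩ = A' ⟨x.fst, hA.1 ha⟩ := hA.2 rfl
  have e2 : B ⟨x.snd, hb⟩ = B' ⟨x.snd, hB.1 hb⟩ := hB.2 rfl
  have e3 : C ⟨x.fst, hc⟩ = C' ⟨x.fst, hC.1 hc⟩ := hC.2 rfl
  have e4 : D ⟨x.snd, hd⟩ = D' ⟨x.snd, hD.1 hd⟩ := hD.2 rfl
  rw [e1, e2, e3, e4]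


end Plumb

open scoped InnerProductSpace

theorem statement8 {H₁ H₂ : Type*}
    [NormedAddCommGroup H₁] [InnerProductSpace ℂ H₁] [CompleteSpace H₁]
    [NormedAddCommGroup H₂] [InnerProductSpace ℂ H₂] [CompleteSpace H₂]
    (A : H₁ →ₗ.[ℂ] H₁) (B : H₂ →ₗ.[ℂ] H₁) (C : H₁ →ₗ.[ℂ] H₂) (D : H₂ →ₗ.[ℂ] H₂)
    (hAC : A.domain = C.domain) (hBD : B.domain = D.domain)
    (h1 : Dense (A.domain : Set H₁)) (h2 : Dense (B.domain : Set H₂))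
    (hsa : IsSelfAdjoint (blockOpL A B C D)) :
    A.IsClosable ∧ B.IsClosable ∧ C.IsClosable ∧ D.IsClosable ∧
    blockOpL A B C D = blockOpL A.closure B.closure C.closure D.closure ∧
    blockOpL A B C D = blockOpL A.adjoint C.adjoint B.adjoint D.adjoint := by
  classical
  have h1' : Dense (C.domain : Set H₁) := hAC ▸ h1
  have h2' : Dense (D.domain : Set H₂) := hBD ▸ h2
  have hdense : Dense ((blockOpL A B C D).domain : Set (WithLp 2 (H₁ × H₂))) :=
    hsa.dense_domain
  rw [LinearPMap.isSelfAdjoint_def] at hsa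
  have hsymm : ∀ x y : (blockOpL A B C D).domain,
      ⟪blockOpL A B C D x, (y : WithLp 2 (H₁ × H₂))⟫_ℂ
        = ⟪(x : WithLp 2 (H₁ × H₂)), blockOpL A B C D y⟫_ℂ := by
    have h := LinearPMap.adjoint_isFormalAdjoint hdense
    rw [hsa] at h
    exact h
  -- membership of "coordinate" points
  have memJ₁ : ∀ a : A.domain, (WithLp.equiv 2 (H₁ × H₂)).symm ((a : H₁), 0) ∈ (blockOpL A B C D).domain := fun a =>
    mem_blockOpL_domain_iff.mpr ⟨⟨a.2, hAC.le a.2⟩, zero_mem _, zero_mem _⟩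
  have memJ₂ : ∀ b : B.domain, (WithLp.equiv 2 (H₁ × H₂)).symm (0, (b : H₂)) ∈ (blockOpL A B C D).domain := fun b =>
    mem_blockOpL_domain_iff.mpr ⟨⟨zero_mem _, zero_mem _⟩, b.2, hBD.le b.2⟩
  -- zero values
  have hA0 : ∀ h : (0 : H₁) ∈ A.domain, A ⟨0, h⟩ = 0 := fun h => by
    rw [show (⟨0, h⟩ : A.domain) = 0 from rfl, LinearPMap.map_zero]
  have hB0 : ∀ h : (0 : H₂) ∈ B.domain, B ⟨0, h⟩ = 0 := fun h => by
    rw [show (⟨0, h⟩ : B.domain) = 0 from rfl, LinearPMap.map_zero]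
  have hC0 : ∀ h : (0 : H₁) ∈ C.domain, C ⟨0, h⟩ = 0 := fun h => by
    rw [show (⟨0, h⟩ : C.domain) = 0 from rfl, LinearPMap.map_zero]
  have hD0 : ∀ h : (0 : H₂) ∈ D.domain, D ⟨0, h⟩ = 0 := fun h => by
    rw [show (⟨0, h⟩ : D.domain) = 0 from rfl, LinearPMap.map_zero]
  -- values at coordinate points
  have applyJ₁ : ∀ a : A.domain, blockOpL A B C D ⟨(WithLp.equiv 2 (H₁ × H₂)).symm ((a : H₁), 0), memJ₁ a⟩
      = (WithLp.equiv 2 (H₁ × H₂)).symm (A a, C ⟨(a : H₁), hAC.le a.2⟩) := by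
    intro a
    rw [blockOpL_apply' a.2 (hAC.le a.2) (zero_mem _) (zero_mem _) (memJ₁ a)]
    rw [hB0, hD0, add_zero, add_zero]
  have applyJ₂ : ∀ b : B.domain, blockOpL A B C D ⟨(WithLp.equiv 2 (H₁ × H₂)).symm (0, (b : H₂)), memJ₂ b⟩
      = (WithLp.equiv 2 (H₁ × H₂)).symm (B b, D ⟨(b : H₂), hBD.le b.2⟩) := by
    intro b
    rw [blockOpL_apply' (zero_mem _) (zero_mem _) b.2 (hBD.le b.2) (memJ₂ b)]
    rw [hA0, hC0, zero_add, zero_add]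
  -- the four key scalar identities
  have key11 : ∀ u v : A.domain, ⟪A u, (v : H₁)⟫_ℂ = ⟪(u : H₁), A v⟫_ℂ := by
    intro u v
    have h := hsymm ⟨(WithLp.equiv 2 (H₁ × H₂)).symm ((u : H₁), 0), memJ₁ u⟩ ⟨(WithLp.equiv 2 (H₁ × H₂)).symm ((v : H₁), 0), memJ₁ v⟩
    rw [applyJ₁ u, applyJ₁ v] at h
    simpa [WithLp.prod_inner_apply, WithLp.equiv_symm_apply, WithLp.ofLp_toLp, WithLp.ofLp_fst, WithLp.ofLp_snd] using h
  have key21 : ∀ (u : A.domain) (w : B.domain),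
      ⟪C ⟨(u : H₁), hAC.le u.2⟩, (w : H₂)⟫_ℂ = ⟪(u : H₁), B w⟫_ℂ := by
    intro u w
    have h := hsymm ⟨(WithLp.equiv 2 (H₁ × H₂)).symm ((u : H₁), 0), memJ₁ u⟩ ⟨(WithLp.equiv 2 (H₁ × H₂)).symm (0, (w : H₂)), memJ₂ w⟩
    rw [applyJ₁ u, applyJ₂ w] at h
    simpa [WithLp.prod_inner_apply, WithLp.equiv_symm_apply, WithLp.ofLp_toLp, WithLp.ofLp_fst, WithLp.ofLp_snd] using h
  have key12 : ∀ (w : B.domain) (v : A.domain),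
      ⟪B w, (v : H₁)⟫_ℂ = ⟪(w : H₂), C ⟨(v : H₁), hAC.le v.2⟩⟫_ℂ := by
    intro w v
    have h := hsymm ⟨(WithLp.equiv 2 (H₁ × H₂)).symm (0, (w : H₂)), memJ₂ w⟩ ⟨(WithLp.equiv 2 (H₁ × H₂)).symm ((v : H₁), 0), memJ₁ v⟩
    rw [applyJ₂ w, applyJ₁ v] at h
    simpa [WithLp.prod_inner_apply, WithLp.equiv_symm_apply, WithLp.ofLp_toLp, WithLp.ofLp_fst, WithLp.ofLp_snd] using h
  have key22 : ∀ w w' : B.domain,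
      ⟪D ⟨(w : H₂), hBD.le w.2⟩, (w' : H₂)⟫_ℂ = ⟪(w : H₂), D ⟨(w' : H₂), hBD.le w'.2⟩⟫_ℂ := by
    intro w w'
    have h := hsymm ⟨(WithLp.equiv 2 (H₁ × H₂)).symm (0, (w : H₂)), memJ₂ w⟩ ⟨(WithLp.equiv 2 (H₁ × H₂)).symm (0, (w' : H₂)), memJ₂ w'⟩
    rw [applyJ₂ w, applyJ₂ w'] at h
    simpa [WithLp.prod_inner_apply, WithLp.equiv_symm_apply, WithLp.ofLp_toLp, WithLp.ofLp_fst, WithLp.ofLp_snd] using h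
  -- inclusions into adjoints
  have hA_le : A ≤ A.adjoint := by
    refine ⟨fun y hy => LinearPMap.mem_adjoint_domain_of_exists _
      ⟨A ⟨y, hy⟩, fun v => key11 ⟨y, hy⟩ v⟩, ?_⟩
    intro x y hxy
    refine (LinearPMap.adjoint_apply_eq h1 y fun v => ?_).symm
    rw [← hxy]
    exact key11 x v
  have hB_le : B ≤ C.adjoint := by
    have keyB : ∀ (w : B.domain) (x : C.domain), ⟪B w, (x : H₁)⟫_ℂ = ⟪(w : H₂), C x⟫_ℂ := by
      intro w x
      have := key12 w ⟨(x : H₁), hAC.symm.le x.2⟩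
      simpa using this
    refine ⟨fun y hy => LinearPMap.mem_adjoint_domain_of_exists _
      ⟨B ⟨y, hy⟩, fun v => keyB ⟨y, hy⟩ v⟩, ?_⟩
    intro x y hxy
    refine (LinearPMap.adjoint_apply_eq h1' y fun v => ?_).symm
    rw [← hxy]
    exact keyB x v
  have hC_le : C ≤ B.adjoint := by
    have keyC : ∀ (u : C.domain) (w : B.domain), ⟪C u, (w : H₂)⟫_ℂ = ⟪(u : H₁), B w⟫_ℂ := by
      intro u w
      have := key21 ⟨(u : H₁), hAC.symm.le u.2⟩ w
      simpa using this
    refine ⟨fun y hy => LinearPMap.mem_adjoint_domain_of_exists _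
      ⟨C ⟨y, hy⟩, fun v => keyC ⟨y, hy⟩ v⟩, ?_⟩
    intro x y hxy
    refine (LinearPMap.adjoint_apply_eq h2 y fun v => ?_).symm
    rw [← hxy]
    exact keyC x v
  have hD_le : D ≤ D.adjoint := by
    have keyD : ∀ u v : D.domain, ⟪D u, (v : H₂)⟫_ℂ = ⟪(u : H₂), D v⟫_ℂ := by
      intro u v
      have := key22 ⟨(u : H₂), hBD.symm.le u.2⟩ ⟨(v : H₂), hBD.symm.le v.2⟩
      simpa using this
    refine ⟨fun y hy => LinearPMap.mem_adjoint_domain_of_exists _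
      ⟨D ⟨y, hy⟩, fun v => keyD ⟨y, hy⟩ v⟩, ?_⟩
    intro x y hxy
    refine (LinearPMap.adjoint_apply_eq h2' y fun v => ?_).symm
    rw [← hxy]
    exact keyD x v
  -- closedness of the adjoints
  have hAadj := aux_adjoint_isClosed h1
  have hBadj := aux_adjoint_isClosed h2
  have hCadj := aux_adjoint_isClosed h1'
  have hDadj := aux_adjoint_isClosed h2'
  -- closability
  have hAc : A.IsClosable := hAadj.isClosable.leIsClosable hA_le
  have hBc : B.IsClosable := hCadj.isClosable.leIsClosable hB_le
  have hCc : C.IsClosable := hBadj.isClosable.leIsClosable hC_le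
  have hDc : D.IsClosable := hDadj.isClosable.leIsClosable hD_le
  -- closures are contained in adjoints
  have hAcl : A.closure ≤ A.adjoint := aux_closure_le_of_le_closed hA_le hAadj
  have hBcl : B.closure ≤ C.adjoint := aux_closure_le_of_le_closed hB_le hCadj
  have hCcl : C.closure ≤ B.adjoint := aux_closure_le_of_le_closed hC_le hBadj
  have hDcl : D.closure ≤ D.adjoint := aux_closure_le_of_le_closed hD_le hDadj
  -- the chain of inclusions
  have le1 : blockOpL A B C D ≤ blockOpL A.closure B.closure C.closure D.closure :=
    blockOpL_mono A.le_closure B.le_closure C.le_closure D.le_closure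
  have le2 : blockOpL A.closure B.closure C.closure D.closure
      ≤ blockOpL A.adjoint C.adjoint B.adjoint D.adjoint :=
    blockOpL_mono hAcl hBcl hCcl hDcl
  have le3 : blockOpL A.adjoint C.adjoint B.adjoint D.adjoint ≤ blockOpL A B C D := by
    have hf : (blockOpL A B C D).IsFormalAdjoint
        (blockOpL A.adjoint C.adjoint B.adjoint D.adjoint) := by
      rintro ⟨x, hx⟩ ⟨y, hy⟩
      obtain ⟨⟨ha, hc⟩, hb, hd⟩ := mem_blockOpL_domain_iff.mp hx
      obtain ⟨⟨ha', hb'⟩, hc', hd'⟩ := mem_blockOpL_domain_iff.mp hy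
      rw [blockOpL_apply ha hc hb hd hx, blockOpL_apply ha' hb' hc' hd' hy]
      have i1 : ⟪A ⟨x.fst, ha⟩, y.fst⟫_ℂ = ⟪x.fst, A.adjoint ⟨y.fst, ha'⟩⟫_ℂ := by
        have := LinearPMap.adjoint_isFormalAdjoint h1 ⟨y.fst, ha'⟩ ⟨x.fst, ha⟩
        have := congrArg (starRingEnd ℂ) this
        simpa [inner_conj_symm] using this.symm
      have i2 : ⟪B ⟨x.snd, hb⟩, y.fst⟫_ℂ = ⟪x.snd, B.adjoint ⟨y.fst, hb'⟩⟫_ℂ := by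
        have := LinearPMap.adjoint_isFormalAdjoint h2 ⟨y.fst, hb'⟩ ⟨x.snd, hb⟩
        have := congrArg (starRingEnd ℂ) this
        simpa [inner_conj_symm] using this.symm
      have i3 : ⟪C ⟨x.fst, hc⟩, y.snd⟫_ℂ = ⟪x.fst, C.adjoint ⟨y.snd, hc'⟩⟫_ℂ := by
        have := LinearPMap.adjoint_isFormalAdjoint h1' ⟨y.snd, hc'⟩ ⟨x.fst, hc⟩
        have := congrArg (starRingEnd ℂ) this
        simpa [inner_conj_symm] using this.symm
      have i4 : ⟪D ⟨x.snd, hd⟩, y.snd⟫_ℂ = ⟪x.snd, D.adjoint ⟨y.snd, hd'⟩⟫_ℂ := by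
        have := LinearPMap.adjoint_isFormalAdjoint h2' ⟨y.snd, hd'⟩ ⟨x.snd, hd⟩
        have := congrArg (starRingEnd ℂ) this
        simpa [inner_conj_symm] using this.symm
      simp only [WithLp.prod_inner_apply, WithLp.equiv_symm_apply, WithLp.ofLp_toLp, WithLp.ofLp_fst, WithLp.ofLp_snd,
        inner_add_left, inner_add_right, i1, i2, i3, i4]
      ring
    have := LinearPMap.IsFormalAdjoint.le_adjoint hdense hf
    rwa [hsa] at this
  exact ⟨hAc, hBc, hCc, hDc, le_antisymm le1 (le2.trans le3),
    le_antisymm (le1.trans le2) le3⟩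


end BlockOp
end
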